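/- Let M be a positive integer congruent to 2 modulo 4, and let the cyclic group Z/M act on the abelian group Z/2 × Z/2 by letting the generator g act by swapping the two coordinates. Then the second group cohomology H^2(Z/M; Z/2 × Z/2) is trivial. -/

import Mathlib

/-- Let `M` be a positive integer congruent to `2` modulo `4`, and let the
cyclic group `ℤ/M` (written multiplicatively as `Multiplicative (ZMod M)`) act on the abelian
group `ℤ/2 × ℤ/2` by letting the generator act by swapping the two coordinates.  Then the
second group cohomology `H²(ℤ/M; ℤ/2 × ℤ/2)` is trivial. -/
theorem h2_swap_action_zmod_two_sq_of_two_mod_four (M : ℕ) (hM : M % 4 = 2)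
    (ρ : Representation ℤ (Multiplicative (ZMod M)) (ZMod 2 × ZMod 2))
    (hρ : ρ (Multiplicative.ofAdd (1 : ZMod M)) =
      (LinearEquiv.prodComm ℤ (ZMod 2) (ZMod 2)).toLinearMap) :
    Subsingleton (groupCohomology.H2 (Rep.of ρ)) := by
  haveI : NeZero M := ⟨by omega⟩
  refine subsingleton_of_forall_eq 0 (fun x => ?_)
  induction x using groupCohomology.H2_induction_on with | h f => ?_
  rw [groupCohomology.H2π_eq_zero_iff]
  suffices hex : ∃ x : Multiplicative (ZMod M) → ZMod 2 × ZMod 2, ∀ g h : Multiplicative (ZMod M),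
      ρ g (x h) - x (g * h) + x g = f.1 (g, h) by
    obtain ⟨x, hx⟩ := hex
    exact ⟨x, funext fun p => by simpa [groupCohomology.d₁₂_hom_apply] using hx p.1 p.2⟩
  set G := Multiplicative (ZMod M)
  set σ : ℕ → G := fun n => Multiplicative.ofAdd ((n : ℕ) : ZMod M) with hσdef
  -- basic facts about A
  have htwo : ∀ a : ZMod 2 × ZMod 2, a + a = 0 := by
    intro a
    have h : ∀ x : ZMod 2, x + x = 0 := by decide
    exact Prod.ext (h a.1) (h a.2)
  -- basic facts about σ and ρ
  have hσmul : ∀ a b : ℕ, σ a * σ b = σ (a + b) := by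
    intro a b
    simp only [hσdef, Nat.cast_add]
    rfl
  have hσM : σ M = 1 := by simp [hσdef]
  have hσper : ∀ a : ℕ, σ (a + M) = σ a := by
    intro a; rw [← hσmul, hσM, mul_one]
  have hσ0 : σ 0 = 1 := by simp [hσdef]
  have hρ1 : ∀ a : ZMod 2 × ZMod 2, ρ (σ 1) a = Prod.swap a := by
    intro a; simp only [hσdef, Nat.cast_one, hρ]; rfl
  have hρadd : ∀ (m n : ℕ) (a : ZMod 2 × ZMod 2),
      ρ (σ (m + n)) a = ρ (σ m) (ρ (σ n) a) := by
    intro m n a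
    rw [← hσmul, map_mul, Module.End.mul_apply]
  have hρsucc : ∀ (n : ℕ) (a : ZMod 2 × ZMod 2),
      ρ (σ (n + 1)) a = Prod.swap (ρ (σ n) a) := by
    intro n a
    rw [Nat.add_comm, hρadd, hρ1]
  have hor : ∀ (n : ℕ) (a : ZMod 2 × ZMod 2),
      ρ (σ n) a = a ∨ ρ (σ n) a = Prod.swap a := by
    intro n a
    induction n with
    | zero => left; rw [hσ0, map_one, Module.End.one_apply]
    | succ n ih =>
      rcases ih with h | h
      · right; rw [hρsucc, h]
      · left; rw [hρsucc, h, Prod.swap_swap]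
  -- the cocycle as a function
  set f' : G × G → ZMod 2 × ZMod 2 := fun p => f.1 p with hf'def
  have hcoc : ∀ g h j : G, f' (g * h, j) + f' (g, h) = ρ g (f' (h, j)) + f' (g, h * j) :=
    (groupCohomology.mem_cocycles₂_iff (A := Rep.of ρ) f.1).1 f.2
  have hone : ∀ g : G, f' (g, 1) = ρ g (f' (1, 1)) :=
    fun g => groupCohomology.cocycles₂_map_one_snd f g
  clear hρ
  -- partial sums
  set f0 : ℕ → ZMod 2 × ZMod 2 := fun j => f' (σ j, σ 1) with hf0def
  set F : ℕ → ZMod 2 × ZMod 2 := fun k => ∑ j ∈ Finset.range k, f0 j with hFdef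
  set c : ZMod 2 × ZMod 2 := F M with hcdef
  have hf0per : ∀ j : ℕ, f0 (j + M) = f0 j := by
    intro j; simp only [hf0def, hσper]
  have hFsucc : ∀ k : ℕ, F (k + 1) = F k + f0 k := by
    intro k; simp only [hFdef, Finset.sum_range_succ]
  have hF0 : F 0 = 0 := by simp [hFdef]
  have hF1 : F 1 = f0 0 := by simp [hFdef]
  have hFadd : ∀ k : ℕ, F (k + M) = F k + c := by
    intro k
    induction k with
    | zero => rw [Nat.zero_add, hF0, zero_add]
    | succ k ih =>
      have : k + 1 + M = (k + M) + 1 := by omega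
      rw [this, hFsucc, ih, hf0per, hFsucc]
      abel
  -- the key cocycle identity
  have hstar : ∀ k L : ℕ, f' (σ k, σ L) =
      F (k + L) - F k - ρ (σ k) (F L) + ρ (σ k) (f' (1, 1)) := by
    intro k L
    induction L with
    | zero =>
      rw [hσ0, hone, Nat.add_zero, hF0, map_zero, sub_self, zero_sub, neg_zero, zero_add]
    | succ L ih =>
      have h := hcoc (σ k) (σ L) (σ 1)
      rw [hσmul, hσmul] at h
      have e1 : f' (σ (k + L), σ 1) = f0 (k + L) := rfl
      have e2 : f' (σ L, σ 1) = f0 L := rfl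
      have hkL1 : k + (L + 1) = (k + L) + 1 := by omega
      rw [e1, e2] at h
      rw [hkL1, hFsucc (k + L), hFsucc L, map_add]
      linear_combination ih - h
  -- c is invariant
  have hc : Prod.swap c = c := by
    have h := hstar 1 M
    rw [hσM, hone] at h
    have hFM1 : F (1 + M) = F 1 + c := hFadd 1
    rw [hFM1, hρ1, hρ1, ← hcdef] at h
    have h2 : c - Prod.swap c = 0 := by linear_combination - h
    rw [← sub_eq_zero]
    linear_combination - h2
  -- the element b with norm c
  set b : ZMod 2 × ZMod 2 := (c.1, 0) with hbdef
  have hbswap : b + Prod.swap b = c := by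
    have hc2 : c.1 = c.2 := congrArg Prod.snd hc
    refine Prod.ext ?_ ?_ <;> simp [hbdef, hc2.symm]
  set T : ℕ → ZMod 2 × ZMod 2 := fun k => ∑ j ∈ Finset.range k, ρ (σ j) b with hTdef
  have hTsucc : ∀ k : ℕ, T (k + 1) = T k + ρ (σ k) b := by
    intro k; simp only [hTdef, Finset.sum_range_succ]
  have hT0 : T 0 = 0 := by simp [hTdef]
  have hpair : ∀ j : ℕ, ρ (σ j) b + ρ (σ (j + 1)) b = c := by
    intro j
    rw [hρsucc]
    rcases hor j b with h | h <;> rw [h]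
    · exact hbswap
    · rw [Prod.swap_swap, add_comm]; exact hbswap
  have hT2 : ∀ n : ℕ, T (2 * n) = n • c := by
    intro n
    induction n with
    | zero => simpa using hT0
    | succ n ih =>
      have h1 : 2 * (n + 1) = (2 * n + 1) + 1 := by omega
      rw [h1, hTsucc, hTsucc, ih, add_assoc, hpair, succ_nsmul]
  have hTM : T M = c := by
    obtain ⟨t, ht⟩ : ∃ t, M = 4 * t + 2 := ⟨M / 4, by omega⟩
    have h1 : M = 2 * (2 * t + 1) := by omega
    rw [h1, hT2, succ_nsmul, mul_nsmul, two_nsmul, htwo, smul_zero, zero_add]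
  have hTadd : ∀ k : ℕ, T (k + M) = T k + c := by
    intro k
    induction k with
    | zero => rw [Nat.zero_add, hTM, hT0, zero_add]
    | succ k ih =>
      have h1 : k + 1 + M = (k + M) + 1 := by omega
      rw [h1, hTsucc, ih, hσper, hTsucc]
      abel
  have hTsplit : ∀ k l : ℕ, T (k + l) = T k + ρ (σ k) (T l) := by
    intro k l
    induction l with
    | zero => rw [Nat.add_zero, hT0, map_zero, add_zero]
    | succ l ih =>
      have h1 : k + (l + 1) = (k + l) + 1 := by omega
      rw [h1, hTsucc, ih, hρadd, hTsucc, map_add, add_assoc]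
  -- the 1-cochain
  set x0 : ℕ → ZMod 2 × ZMod 2 := fun k => F k - T k + f' (1, 1) with hx0def
  have hx0per : ∀ k : ℕ, x0 (k + M) = x0 k := by
    intro k
    simp only [hx0def, hFadd, hTadd]
    abel
  have hkey : ∀ k l : ℕ,
      ρ (σ k) (x0 l) - x0 (k + l) + x0 k = f' (σ k, σ l) := by
    intro k l
    simp only [hx0def]
    rw [hstar k l, hTsplit k l, map_add, map_sub]
    set u := ρ (σ k) (F l)
    set v := ρ (σ k) (f' (1, 1))
    set w := F (k + l)
    linear_combination htwo u + htwo (F k) - htwo w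
  -- conclusion
  refine ⟨fun g => x0 (Multiplicative.toAdd g).val, fun g h => ?_⟩
  have hval : ∀ g : G, σ (Multiplicative.toAdd g).val = g := by
    intro g
    simp only [hσdef, ZMod.natCast_val, ZMod.cast_id]
    rfl
  set k := (Multiplicative.toAdd g).val with hk
  set l := (Multiplicative.toAdd h).val with hl
  set m := (Multiplicative.toAdd (g * h)).val with hm
  have hmod : m = (k + l) % M := by
    rw [hm, hk, hl, toAdd_mul, ZMod.val_add]
  have hkM : k < M := ZMod.val_lt _
  have hlM : l < M := ZMod.val_lt _
  have hx0m : x0 m = x0 (k + l) := by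
    rcases Nat.lt_or_ge (k + l) M with hlt | hge
    · rw [hmod, Nat.mod_eq_of_lt hlt]
    · have h1 : (k + l) % M = k + l - M := by
        rw [Nat.mod_eq_sub_mod hge, Nat.mod_eq_of_lt (by omega)]
      rw [hmod, h1, ← hx0per (k + l - M)]
      congr 1
      omega
  show ρ g (x0 l) - x0 m + x0 k = f' (g, h)
  rw [hx0m, ← hval g, ← hval h, ← hk, ← hl, hkey k l]
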